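/- Let q = 2^e be even and δ ∈ F_{q^6} \ F_{q^3}. Then the map x ↦ (x^q + δx)^{1+q^3} is NOT a permutation of F_{q^3}. -/

import Mathlib

open Finset

section Helpers

/-- In characteristic two, `(A+B)^(2^k-1)` expands with all binomial coefficients 1. -/
lemma char2_expand {R : Type*} [CommRing R] [CharP R 2] (k : ℕ) (A B : R) :
    (A + B) ^ (2 ^ k - 1) = ∑ i ∈ Finset.range (2 ^ k), A ^ i * B ^ (2 ^ k - 1 - i) := by
  induction k with
  | zero => simp
  | succ k ih =>
    have h1 : (1:ℕ) ≤ 2 ^ k := Nat.one_le_two_pow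
    have hsplit : (2:ℕ) ^ (k+1) - 1 = (2 ^ k - 1) + 2 ^ k := by
      have : (2:ℕ) ^ (k+1) = 2 ^ k + 2 ^ k := by ring
      omega
    haveI : Fact (Nat.Prime 2) := ⟨Nat.prime_two⟩
    have hfrob : (A + B) ^ (2 ^ k) = A ^ (2 ^ k) + B ^ (2 ^ k) :=
      add_pow_char_pow A B 2 k
    rw [hsplit, pow_add, ih, hfrob, mul_add, sum_mul, sum_mul]
    have e1 : ∑ i ∈ range (2 ^ k), A ^ i * B ^ (2 ^ k - 1 - i) * A ^ 2 ^ k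
        = ∑ i ∈ range (2 ^ k), A ^ (2 ^ k + i) * B ^ (2 ^ k - 1 + 2 ^ k - (2 ^ k + i)) := by
      refine sum_congr rfl fun i hi => ?_
      rw [mem_range] at hi
      have : 2 ^ k - 1 + 2 ^ k - (2 ^ k + i) = 2 ^ k - 1 - i := by omega
      rw [this, pow_add]
      ring
    have e2 : ∑ i ∈ range (2 ^ k), A ^ i * B ^ (2 ^ k - 1 - i) * B ^ 2 ^ k
        = ∑ i ∈ range (2 ^ k), A ^ i * B ^ (2 ^ k - 1 + 2 ^ k - i) := by
      refine sum_congr rfl fun i hi => ?_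
      rw [mem_range] at hi
      have : 2 ^ k - 1 + 2 ^ k - i = (2 ^ k - 1 - i) + 2 ^ k := by omega
      rw [this, pow_add, mul_assoc]
    have hr : (2:ℕ) ^ (k+1) = 2 ^ k + 2 ^ k := by ring
    rw [e1, e2, hr, Finset.sum_range_add (fun i => A ^ i * B ^ (2 ^ k - 1 + 2 ^ k - i))
      (2^k) (2^k), add_comm]

/-- Power sums over a finite field. -/
lemma sum_pow_field {F : Type*} [Field F] [Fintype F] (N : ℕ) (hN : N ≠ 0) :
    ∑ x : F, x ^ N = if (Fintype.card F - 1) ∣ N then (-1 : F) else 0 := by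
  classical
  let φ : Fˣ ↪ F := ⟨fun x ↦ x, fun _ _ h => Units.ext h⟩
  have huniv : univ.map φ = univ \ {0} := by
    ext x
    simp only [mem_map, mem_univ, Function.Embedding.coeFn_mk, true_and, mem_sdiff,
      mem_singleton, φ]; exact isUnit_iff_ne_zero
  calc ∑ x : F, x ^ N = ∑ x ∈ univ \ {(0:F)}, x ^ N := by
        rw [← sum_sdiff ({0} : Finset F).subset_univ, sum_singleton, zero_pow hN, add_zero]
    _ = ∑ x : Fˣ, (x : F) ^ N := by
        rw [← huniv, sum_map]
        rfl
    _ = _ := FiniteField.sum_pow_units F N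

/-- The key divisibility characterization. -/
lemma div_iff (q i j : ℕ) (hq : 2 ≤ q) (hi : i < q^2) (hj : j < q^2) :
    ((q^3 - 1) ∣ ((q*i + (q^2 - 1 - i)) + (q*j + (q^2 - 1 - j)))) ↔ i + j = q^2 - q - 1 := by
  have hq2 : q + 1 ≤ q ^ 2 := by nlinarith
  have hq3 : q ^ 2 + 1 ≤ q ^ 3 := by nlinarith
  have h1 : (1:ℕ) ≤ q^2 := by omega
  have hone3 : (1:ℕ) ≤ q^3 := by omega
  have hii : i ≤ q^2 - 1 := by omega
  have hjj : j ≤ q^2 - 1 := by omega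
  -- pass to ℤ
  have key : ((q:ℤ)^3 - 1) ∣ ((q*i + ((q:ℤ)^2 - 1 - i)) + (q*j + ((q:ℤ)^2 - 1 - j)))
      ↔ (i:ℤ) + j = (q:ℤ)^2 - q - 1 := by
    have hfac : ((q:ℤ)^3 - 1) = ((q:ℤ) - 1) * ((q:ℤ)^2 + q + 1) := by ring
    have hE : ((q:ℤ)*i + ((q:ℤ)^2 - 1 - i)) + ((q:ℤ)*j + ((q:ℤ)^2 - 1 - j))
        = ((q:ℤ) - 1) * ((i:ℤ) + j + 2*q + 2) := by ring
    rw [hfac, hE, mul_dvd_mul_iff_left (by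
      have : (2:ℤ) ≤ (q:ℤ) := by exact_mod_cast hq
      omega : ((q:ℤ) - 1) ≠ 0)]
    constructor
    · rintro ⟨k, hk⟩
      have hqz : (2:ℤ) ≤ (q:ℤ) := by exact_mod_cast hq
      have hd : (0:ℤ) < (q:ℤ)^2 + q + 1 := by positivity
      have hm1 : (0:ℤ) < (i:ℤ) + j + 2*q + 2 := by positivity
      have hm2 : (i:ℤ) + j + 2*q + 2 < 2*((q:ℤ)^2 + q + 1) := by
        have hi' : (i:ℤ) < (q:ℤ)^2 := by exact_mod_cast hi
        have hj' : (j:ℤ) < (q:ℤ)^2 := by exact_mod_cast hj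
        nlinarith
      have hk1 : 0 < k := by nlinarith
      have hk2 : k < 2 := by nlinarith
      have : k = 1 := by omega
      rw [this, mul_one] at hk
      linarith [hk]
    · intro h
      exact ⟨1, by rw [mul_one]; linarith⟩
  constructor
  · intro hdvd
    have : ((q^3 - 1 : ℕ) : ℤ) ∣ (((q*i + (q^2 - 1 - i)) + (q*j + (q^2 - 1 - j)) : ℕ) : ℤ) :=
      Int.natCast_dvd_natCast.mpr hdvd
    rw [show (((q*i + (q^2 - 1 - i)) + (q*j + (q^2 - 1 - j)) : ℕ) : ℤ)
        = ((q:ℤ)*i + ((q:ℤ)^2 - 1 - i)) + ((q:ℤ)*j + ((q:ℤ)^2 - 1 - j)) by push_cast [hii, hjj, h1]; ring,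
      show ((q^3 - 1 : ℕ) : ℤ) = (q:ℤ)^3 - 1 by push_cast [hone3]; ring] at this
    have := key.mp this
    have h2 : i + j + q + 1 = q ^ 2 := by
      have : (i:ℤ) + j + q + 1 = (q:ℤ)^2 := by linarith
      exact_mod_cast this
    omega
  · intro h
    have h2 : (i:ℤ) + j = (q:ℤ)^2 - q - 1 := by
      have : i + j + q + 1 = q^2 := by omega
      have := congrArg (fun n : ℕ => (n:ℤ)) this
      push_cast at this
      linarith
    have := key.mpr h2
    have h3 : (((q*i + (q^2 - 1 - i)) + (q*j + (q^2 - 1 - j)) : ℕ) : ℤ)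
        = ((q:ℤ)*i + ((q:ℤ)^2 - 1 - i)) + ((q:ℤ)*j + ((q:ℤ)^2 - 1 - j)) := by
      push_cast [hii, hjj, h1]; ring
    have h4 : ((q^3 - 1 : ℕ) : ℤ) = (q:ℤ)^3 - 1 := by
      push_cast [hone3]; ring
    rw [← h3, ← h4] at this
    exact_mod_cast this

end Helpers

set_option maxHeartbeats 2000000 in
/-- For `q = 2^e` and `δ ∈ F_{q⁶} \ F_{q³}`, the map
`x ↦ (x^q + δx)^{1+q³}` is not a permutation of `F_{q³}`. -/
theorem frob_norm_not_perm (q e : ℕ) (he : 0 < e) (hq : q = 2 ^ e)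
    (K L3 E : Type) [Field K] [Fintype K] [Field L3] [Field E]
    [Algebra K L3] [Algebra L3 E] [Algebra K E] [IsScalarTower K L3 E]
    (hcard : Fintype.card K = q)
    (hdim : Module.finrank K L3 = 3) (hdim2 : Module.finrank L3 E = 2)
    (δ : E) (hδ : δ ∉ Set.range (algebraMap L3 E))
    (Q : L3 → L3)
    (hQ : ∀ x, algebraMap L3 E (Q x) =
      ((algebraMap L3 E x) ^ q + δ * algebraMap L3 E x) ^ (1 + q ^ 3)) :
    ¬ Function.Bijective Q := by
  intro hbij
  classical
  haveI : Fact (Nat.Prime 2) := ⟨Nat.prime_two⟩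
  have hq2 : 2 ≤ q := by
    subst hq
    calc 2 = 2 ^ 1 := (pow_one 2).symm
    _ ≤ 2 ^ e := Nat.pow_le_pow_right (by norm_num) he
  -- characteristic 2
  have hcharK : CharP K 2 := by
    obtain ⟨n, hp, hcard2⟩ := FiniteField.card K (ringChar K)
    have hrc : ringChar K = 2 := by
      have hdvd : ringChar K ∣ 2 ^ e := by
        rw [← hq, ← hcard, hcard2]
        exact dvd_pow_self _ (by positivity)
      have h2 : ringChar K ∣ 2 := Nat.Prime.dvd_of_dvd_pow hp hdvd
      exact (Nat.prime_dvd_prime_iff_eq hp Nat.prime_two).mp h2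
    rw [← hrc]; infer_instance
  haveI := hcharK
  haveI : CharP L3 2 := charP_of_injective_algebraMap (algebraMap K L3).injective 2
  haveI : CharP E 2 := charP_of_injective_algebraMap (algebraMap K E).injective 2
  -- finiteness and cardinalities
  haveI : Module.Finite K L3 := Module.finite_of_finrank_pos (by rw [hdim]; norm_num)
  haveI : Finite L3 := Module.finite_of_finite K
  haveI : Fintype L3 := Fintype.ofFinite L3
  haveI : Module.Finite L3 E := Module.finite_of_finrank_pos (by rw [hdim2]; norm_num)
  haveI : Finite E := Module.finite_of_finite L3
  haveI : Fintype E := Fintype.ofFinite E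
  have hcard3 : Fintype.card L3 = q ^ 3 := by
    rw [Module.card_eq_pow_finrank (K := K) (V := L3), hcard, hdim]
  have hcardE : Fintype.card E = q ^ 6 := by
    rw [Module.card_eq_pow_finrank (K := L3) (V := E), hcard3, hdim2, ← pow_mul]
  set A := algebraMap L3 E with hA
  have hAinj : Function.Injective A := A.injective
  have hXfix : ∀ x : L3, x ^ (q ^ 3) = x := fun x => by
    rw [← hcard3]; exact FiniteField.pow_card x
  have hAx : ∀ x : L3, (A x) ^ (q ^ 3) = A x := fun x => by rw [← map_pow, hXfix]
  have hq31 : 1 < q ^ 3 := Nat.one_lt_pow (by norm_num) hq2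
  -- fixed points of the q³-power map lie in the image of L3
  have hfix : ∀ y : E, y ^ (q ^ 3) = y → y ∈ Set.range A := by
    intro y hy
    by_contra hy'
    have hP0 : (Polynomial.X ^ (q^3) - Polynomial.X : Polynomial E) ≠ 0 :=
      FiniteField.X_pow_card_sub_X_ne_zero E hq31
    have hdeg : (Polynomial.X ^ (q^3) - Polynomial.X : Polynomial E).natDegree = q ^ 3 :=
      FiniteField.X_pow_card_sub_X_natDegree_eq E hq31
    set S : Finset E := insert y (Finset.univ.image A) with hS
    have hSsub : S ⊆ (Polynomial.X ^ (q^3) - Polynomial.X : Polynomial E).roots.toFinset := by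
      intro a ha
      rw [Multiset.mem_toFinset, Polynomial.mem_roots hP0]
      rw [hS, Finset.mem_insert] at ha
      have : a ^ (q^3) = a := by
        rcases ha with rfl | ha
        · exact hy
        · obtain ⟨x, _, rfl⟩ := Finset.mem_image.mp ha
          exact hAx x
      simp [Polynomial.IsRoot, sub_eq_zero, this]
    have hcardS : S.card = q ^ 3 + 1 := by
      rw [hS, Finset.card_insert_of_notMem, Finset.card_image_of_injective _ hAinj,
        Finset.card_univ, hcard3]
      intro hmem
      obtain ⟨x, _, rfl⟩ := Finset.mem_image.mp hmem
      exact hy' ⟨x, rfl⟩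
    have hle : S.card ≤ q ^ 3 := by
      calc S.card ≤ (Polynomial.X ^ (q^3) - Polynomial.X : Polynomial E).roots.toFinset.card :=
            Finset.card_le_card hSsub
        _ ≤ Multiset.card (Polynomial.X ^ (q^3) - Polynomial.X : Polynomial E).roots :=
            Multiset.toFinset_card_le _
        _ ≤ _ := (Polynomial.card_roots' _).trans_eq hdeg
    omega
  -- δ and its conjugate
  have hδ0 : δ ≠ 0 := fun h => hδ ⟨0, by rw [map_zero, h]⟩
  set δ' : E := δ ^ (q ^ 3) with hδ'
  have hδ'fix : δ' ^ (q ^ 3) = δ := by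
    rw [hδ', ← pow_mul, show q ^ 3 * q ^ 3 = q ^ 6 by ring, ← hcardE]
    exact FiniteField.pow_card δ
  have hδ'0 : δ' ≠ 0 := pow_ne_zero _ hδ0
  have hδ'ne : δ' ≠ δ := fun h => hδ (hfix δ (by rw [← hδ', h]))
  set sσ := δ + δ' with hsσ
  have hs0 : sσ ≠ 0 := by
    intro h
    exact hδ'ne (by rw [← CharTwo.neg_eq δ]; exact eq_neg_of_add_eq_zero_right h)
  -- Hermite-type power sum
  have hn_lt : q ^ 2 - 1 < Fintype.card L3 - 1 := by
    rw [hcard3]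
    have : q ^ 2 < q ^ 3 := Nat.pow_lt_pow_right hq2 (by norm_num)
    omega
  have hherm : ∑ x : L3, (Q x) ^ (q ^ 2 - 1) = 0 := by
    have hb : ∑ x : L3, (Q x) ^ (q ^ 2 - 1) = ∑ y : L3, y ^ (q ^ 2 - 1) :=
      Fintype.sum_bijective Q hbij _ _ (fun x => rfl)
    rw [hb]
    exact FiniteField.sum_pow_lt_card_sub_one _ _ hn_lt
  have hq2q : q + 1 ≤ q ^ 2 := by
    have h := Nat.mul_le_mul_right q hq2
    rw [pow_two]; omega
  -- factorization of Q over E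
  have hfact : ∀ x : L3, A (Q x) = ((A x) ^ q + δ * A x) * ((A x) ^ q + δ' * A x) := by
    intro x
    rw [hQ x, pow_add, pow_one]
    congr 1
    have hq3pow : q ^ 3 = 2 ^ (e * 3) := by subst hq; rw [← pow_mul]
    have h1 : ((A x) ^ q + δ * A x) ^ (q ^ 3)
        = ((A x) ^ q) ^ (q ^ 3) + (δ * A x) ^ (q ^ 3) := by
      rw [hq3pow]; exact add_pow_char_pow _ _ 2 (e*3)
    have h2 : ((A x) ^ q) ^ (q ^ 3) = (A x) ^ q := by
      rw [← pow_mul, mul_comm, pow_mul, hAx]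
    have h3 : (δ * A x) ^ (q ^ 3) = δ' * A x := by
      rw [mul_pow, hAx, ← hδ']
    rw [h1, h2, h3]
  -- binomial expansion in characteristic two
  have hqq : q ^ 2 = 2 ^ (e * 2) := by subst hq; rw [← pow_mul]
  have hexp : ∀ (γ : E) (x : L3), ((A x) ^ q + γ * A x) ^ (q ^ 2 - 1)
      = ∑ i ∈ Finset.range (q ^ 2), γ ^ (q ^ 2 - 1 - i) * (A x) ^ (q * i + (q ^ 2 - 1 - i)) := by
    intro γ x
    rw [hqq, char2_expand (e*2) ((A x) ^ q) (γ * A x), ← hqq]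
    refine Finset.sum_congr rfl fun i hi => ?_
    rw [mul_pow, ← pow_mul, pow_add]
    ring
  -- the inner power sums over L3
  have hEf : ∀ i j : ℕ, i < q ^ 2 → j < q ^ 2 →
      (∑ x : L3, x ^ ((q*i + (q^2-1-i)) + (q*j + (q^2-1-j))))
      = if i + j = q^2-q-1 then (1:L3) else 0 := by
    intro i j hi hj
    have hpos : 0 < (q*i + (q^2-1-i)) + (q*j + (q^2-1-j)) := by
      rcases Nat.eq_zero_or_pos i with rfl | hip
      · have h1 : 0 < q^2 - 1 - 0 := by omega
        exact Nat.add_pos_left (Nat.add_pos_right _ h1) _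
      · exact Nat.add_pos_left (Nat.add_pos_left (Nat.mul_pos (by omega) hip) _) _
    rw [sum_pow_field _ hpos.ne', hcard3]
    by_cases hcc : i + j = q^2-q-1
    · rw [if_pos ((div_iff q i j hq2 hi hj).mpr hcc), if_pos hcc, CharTwo.neg_eq]
    · rw [if_neg (fun hdvd => hcc ((div_iff q i j hq2 hi hj).mp hdvd)), if_neg hcc]
  -- the double-sum identity
  have hbig : (0:E) = ∑ i ∈ Finset.range (q^2), ∑ j ∈ Finset.range (q^2),
      (if i + j = q^2-q-1 then δ ^ (q^2-1-i) * δ' ^ (q^2-1-j) else 0) := by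
    have h0 : A (∑ x : L3, (Q x) ^ (q^2-1)) = 0 := by rw [hherm, map_zero]
    calc (0:E) = ∑ x : L3, (A (Q x)) ^ (q^2-1) := by
          rw [← h0, map_sum]
          exact Finset.sum_congr rfl fun x _ => map_pow A _ _
      _ = ∑ x : L3, (∑ i ∈ Finset.range (q^2), δ ^ (q^2-1-i) * (A x) ^ (q*i + (q^2-1-i)))
            * (∑ j ∈ Finset.range (q^2), δ' ^ (q^2-1-j) * (A x) ^ (q*j + (q^2-1-j))) := by
          refine Finset.sum_congr rfl fun x _ => ?_
          rw [hfact x, mul_pow, hexp δ x, hexp δ' x]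
      _ = ∑ x : L3, ∑ i ∈ Finset.range (q^2), ∑ j ∈ Finset.range (q^2),
            (δ ^ (q^2-1-i) * δ' ^ (q^2-1-j)) * (A x) ^ ((q*i + (q^2-1-i)) + (q*j + (q^2-1-j))) := by
          refine Finset.sum_congr rfl fun x _ => ?_
          rw [Finset.sum_mul_sum]
          refine Finset.sum_congr rfl fun i _ => Finset.sum_congr rfl fun j _ => ?_
          rw [pow_add]; ring
      _ = ∑ i ∈ Finset.range (q^2), ∑ j ∈ Finset.range (q^2),
            (δ ^ (q^2-1-i) * δ' ^ (q^2-1-j))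
              * A (∑ x : L3, x ^ ((q*i + (q^2-1-i)) + (q*j + (q^2-1-j)))) := by
          rw [Finset.sum_comm]
          refine Finset.sum_congr rfl fun i _ => ?_
          rw [Finset.sum_comm]
          refine Finset.sum_congr rfl fun j _ => ?_
          rw [map_sum, Finset.mul_sum]
          refine Finset.sum_congr rfl fun x _ => ?_
          rw [map_pow]
      _ = _ := by
          refine Finset.sum_congr rfl fun i hi => Finset.sum_congr rfl fun j hj => ?_
          rw [Finset.mem_range] at hi hj
          rw [hEf i j hi hj, apply_ite A, map_one, map_zero, mul_ite, mul_one, mul_zero]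
  -- collapse the double sum to a single sum
  have hsingle : ∑ i ∈ Finset.range (q^2), ∑ j ∈ Finset.range (q^2),
      (if i + j = q^2-q-1 then δ ^ (q^2-1-i) * δ' ^ (q^2-1-j) else 0)
      = ∑ i ∈ Finset.range (q^2-q), δ ^ (q^2-1-i) * δ' ^ (q^2-1-(q^2-q-1-i)) := by
    have hstep : ∀ i ∈ Finset.range (q^2), (∑ j ∈ Finset.range (q^2),
        if i + j = q^2-q-1 then δ ^ (q^2-1-i) * δ' ^ (q^2-1-j) else 0)
        = if i ≤ q^2-q-1 then δ ^ (q^2-1-i) * δ' ^ (q^2-1-(q^2-q-1-i)) else 0 := by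
      intro i hi
      rw [Finset.mem_range] at hi
      by_cases hic : i ≤ q^2-q-1
      · rw [if_pos hic,
          Finset.sum_eq_single_of_mem (q^2-q-1-i) (Finset.mem_range.mpr (by omega))]
        · rw [if_pos (by omega)]
        · intro j hj hne
          rw [Finset.mem_range] at hj
          exact if_neg (by omega)
      · rw [if_neg hic]
        exact Finset.sum_eq_zero fun j hj => if_neg (by rw [Finset.mem_range] at hj; omega)
    rw [Finset.sum_congr rfl hstep, ← Finset.sum_filter]
    have hfil : (Finset.range (q^2)).filter (fun i => i ≤ q^2-q-1) = Finset.range (q^2-q) := by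
      ext a
      simp only [Finset.mem_filter, Finset.mem_range]
      omega
    rw [hfil]
  -- the single sum vanishes
  have hT0 : ∑ i ∈ Finset.range (q^2-q), δ ^ (q^2-1-i) * δ' ^ (q^2-1-(q^2-q-1-i)) = 0 := by
    rw [← hsingle, ← hbig]
  -- telescoping
  have hterm : ∀ i ∈ Finset.range (q^2-q),
      sσ * (δ ^ (q^2-1-i) * δ' ^ (q^2-1-(q^2-q-1-i)))
      = δ ^ (q^2-(i+1)) * δ' ^ (q+(i+1)) - δ ^ (q^2-i) * δ' ^ (q+i) := by
    intro i hi
    rw [Finset.mem_range] at hi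
    have e1 : q^2-1-i + 1 = q^2 - i := by omega
    have e2 : q^2-1-(q^2-q-1-i) = q + i := by omega
    have e3 : q^2-1-i = q^2 - (i+1) := by omega
    have e4 : q + i + 1 = q + (i+1) := by omega
    calc sσ * (δ ^ (q^2-1-i) * δ' ^ (q^2-1-(q^2-q-1-i)))
        = δ ^ (q^2-1-i+1) * δ' ^ (q^2-1-(q^2-q-1-i))
            + δ ^ (q^2-1-i) * δ' ^ (q^2-1-(q^2-q-1-i)+1) := by
          rw [hsσ, pow_succ, pow_succ]; ring
      _ = δ ^ (q^2 - i) * δ' ^ (q + i) + δ ^ (q^2-(i+1)) * δ' ^ (q+(i+1)) := by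
          rw [e2, e1, e3, e4]
      _ = _ := by rw [CharTwo.sub_eq_add]; ring
  have htel : (0:E) = δ ^ q * δ' ^ (q^2) + δ ^ (q^2) * δ' ^ q := by
    have h5 : sσ * (∑ i ∈ Finset.range (q^2-q), δ ^ (q^2-1-i) * δ' ^ (q^2-1-(q^2-q-1-i)))
        = δ ^ q * δ' ^ (q^2) - δ ^ (q^2) * δ' ^ q := by
      calc sσ * (∑ i ∈ Finset.range (q^2-q), δ ^ (q^2-1-i) * δ' ^ (q^2-1-(q^2-q-1-i)))
          = ∑ i ∈ Finset.range (q^2-q), sσ * (δ ^ (q^2-1-i) * δ' ^ (q^2-1-(q^2-q-1-i))) :=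
            Finset.mul_sum _ _ _
        _ = ∑ i ∈ Finset.range (q^2-q),
              ((fun i => δ ^ (q^2-i) * δ' ^ (q+i)) (i+1) - (fun i => δ ^ (q^2-i) * δ' ^ (q+i)) i) :=
            Finset.sum_congr rfl hterm
        _ = (fun i => δ ^ (q^2-i) * δ' ^ (q+i)) (q^2-q) - (fun i => δ ^ (q^2-i) * δ' ^ (q+i)) 0 :=
            Finset.sum_range_sub (fun i => δ ^ (q^2-i) * δ' ^ (q+i)) (q^2-q)
        _ = δ ^ (q^2-(q^2-q)) * δ' ^ (q+(q^2-q)) - δ ^ (q^2-0) * δ' ^ (q+0) := rfl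
        _ = δ ^ q * δ' ^ (q^2) - δ ^ (q^2) * δ' ^ q := by
            rw [show q^2-(q^2-q) = q by omega, show q+(q^2-q) = q^2 by omega,
              Nat.sub_zero, Nat.add_zero]
    rw [← CharTwo.sub_eq_add, ← h5, hT0, mul_zero]
  -- deduce the key identity and derive the contradiction
  have hWeq : δ ^ q * δ' ^ (q^2) = δ ^ (q^2) * δ' ^ q := by
    have h6 := eq_neg_of_add_eq_zero_left htel.symm
    rwa [CharTwo.neg_eq] at h6
  have hlq : (δ' / δ) ^ (q^2) = (δ' / δ) ^ q := by
    rw [div_pow, div_pow, div_eq_div_iff (pow_ne_zero _ hδ0) (pow_ne_zero _ hδ0)]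
    linear_combination hWeq
  have hl3 : (δ' / δ) ^ (q^3) = (δ' / δ)⁻¹ := by
    rw [div_pow, hδ'fix, ← hδ', inv_div]
  have hμq : ((δ' / δ) ^ q) ^ q = (δ' / δ) ^ q := by
    rw [← pow_mul, show q*q = q^2 by ring, hlq]
  have hμ3 : ((δ' / δ) ^ q) ^ (q^3) = (δ' / δ) ^ q := by
    have h7 : ((δ' / δ) ^ q) ^ (q^3) = ((((δ' / δ) ^ q) ^ q) ^ q) ^ q := by
      rw [← pow_mul, ← pow_mul, ← pow_mul, ← pow_mul]
      congr 1
      ring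
    rw [h7, hμq, hμq, hμq]
  have hμinv : ((δ' / δ) ^ q) ^ (q^3) = ((δ' / δ) ^ q)⁻¹ := by
    rw [← pow_mul, mul_comm q (q^3), pow_mul, hl3, inv_pow]
  have hl0 : δ' / δ ≠ 0 := div_ne_zero hδ'0 hδ0
  have hμ1 : (δ' / δ) ^ q = 1 := by
    have hee : (δ' / δ) ^ q = ((δ' / δ) ^ q)⁻¹ := by
      conv_lhs => rw [← hμ3]
      rw [hμinv]
    have h2 : ((δ' / δ) ^ q) * ((δ' / δ) ^ q) = 1 := by
      nth_rewrite 2 [hee]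
      exact mul_inv_cancel₀ (pow_ne_zero _ hl0)
    rcases mul_self_eq_one_iff.mp h2 with h | h
    · exact h
    · rw [h]; exact CharTwo.neg_eq 1
  have hlone : δ' / δ = 1 := by
    have h8 : (δ' / δ) ^ (q^3) = ((δ' / δ) ^ q) ^ (q^2) := by
      rw [← pow_mul]
      congr 1
      ring
    have h9 : (δ' / δ)⁻¹ = 1 := by rw [← hl3, h8, hμ1, one_pow]
    rwa [inv_eq_one] at h9
  exact hδ'ne ((div_eq_one_iff_eq hδ0).mp hlone)
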